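/- arXiv:2605.29840 — 2 statements merged into one kernel-verified Lean document; each statement's English description precedes it below -/
import Mathlib

section
/- Let K ~ Bin(N, q1) and X ~ Bin(N, q0) be binomial random variables with q1 > q0, and let f_N^(1) be the probability mass function of K and F_N^(0) the cumulative distribution function of X. Define S_N = Σ_{k=1}^{N} f_N^(1)[k] · (F_N^(0)[k-1])^{N_R}. Then for fixed N_R (or N_R growing at most linearly in N), lim_{N→∞} S_N = 1. -/
open Filter

/-- Binomial probability mass function with `N` trials and success probability `q`. -/
noncomputable def binPMF (N : ℕ) (q : ℝ) (k : ℕ) : ℝ :=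
  (N.choose k : ℝ) * q ^ k * (1 - q) ^ (N - k)

/-- Binomial cumulative distribution function. -/
noncomputable def binCDF (N : ℕ) (q : ℝ) (k : ℕ) : ℝ :=
  ∑ j ∈ Finset.range (k + 1), binPMF N q j

lemma binPMF_nonneg {N : ℕ} {q : ℝ} (hq0 : 0 ≤ q) (hq1 : q ≤ 1) (k : ℕ) :
    0 ≤ binPMF N q k :=
  mul_nonneg (mul_nonneg (by positivity) (pow_nonneg hq0 _)) (pow_nonneg (by linarith) _)

lemma sum_binPMF_mul_pow (N : ℕ) (q r : ℝ) :
    ∑ k ∈ Finset.range (N + 1), binPMF N q k * r ^ k = (q * r + (1 - q)) ^ N := by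
  rw [add_pow]
  refine Finset.sum_congr rfl fun k _ => ?_
  rw [binPMF, mul_pow]
  ring

lemma sum_binPMF_eq_one (N : ℕ) (q : ℝ) :
    ∑ k ∈ Finset.range (N + 1), binPMF N q k = 1 := by
  have h := sum_binPMF_mul_pow N q 1
  simpa using h

lemma binCDF_nonneg {N : ℕ} {q : ℝ} (hq0 : 0 ≤ q) (hq1 : q ≤ 1) (k : ℕ) :
    0 ≤ binCDF N q k :=
  Finset.sum_nonneg fun j _ => binPMF_nonneg hq0 hq1 j

lemma binCDF_le_one {N : ℕ} {q : ℝ} (hq0 : 0 ≤ q) (hq1 : q ≤ 1) {k : ℕ} (hk : k ≤ N) :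
    binCDF N q k ≤ 1 := by
  rw [← sum_binPMF_eq_one N q]
  exact Finset.sum_le_sum_of_subset_of_nonneg
    (Finset.range_subset_range.2 (by omega)) (fun j _ _ => binPMF_nonneg hq0 hq1 j)

lemma binCDF_mono {N : ℕ} {q : ℝ} (hq0 : 0 ≤ q) (hq1 : q ≤ 1) {j k : ℕ} (h : j ≤ k) :
    binCDF N q j ≤ binCDF N q k :=
  Finset.sum_le_sum_of_subset_of_nonneg
    (Finset.range_subset_range.2 (by omega)) (fun i _ _ => binPMF_nonneg hq0 hq1 i)

/-- Chernoff-type upper tail bound via tilting. -/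
lemma upper_tail {q r : ℝ} (hq0 : 0 ≤ q) (hq1 : q ≤ 1) (hr : 1 ≤ r) (m N : ℕ) :
    ∑ k ∈ Finset.Icc m N, binPMF N q k ≤ (q * r + (1 - q)) ^ N / r ^ m := by
  have hr0 : (0:ℝ) < r := lt_of_lt_of_le one_pos hr
  have h1 : ∑ k ∈ Finset.Icc m N, binPMF N q k
      ≤ ∑ k ∈ Finset.Icc m N, binPMF N q k * r ^ k / r ^ m := by
    refine Finset.sum_le_sum fun k hk => ?_
    have hkm : m ≤ k := (Finset.mem_Icc.1 hk).1
    have hpow : r ^ m ≤ r ^ k := pow_le_pow_right₀ hr hkm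
    have hnn := binPMF_nonneg hq0 hq1 (N := N) k
    rw [le_div_iff₀ (by positivity)]
    exact mul_le_mul_of_nonneg_left hpow hnn
  have h2 : ∑ k ∈ Finset.Icc m N, binPMF N q k * r ^ k / r ^ m
      ≤ (∑ k ∈ Finset.range (N + 1), binPMF N q k * r ^ k) / r ^ m := by
    rw [← Finset.sum_div]
    apply div_le_div_of_nonneg_right ?_ (by positivity)
    refine Finset.sum_le_sum_of_subset_of_nonneg ?_ fun j _ _ =>
      mul_nonneg (binPMF_nonneg hq0 hq1 j) (by positivity)
    intro x hx
    simp only [Finset.mem_Icc] at hx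
    simp only [Finset.mem_range]
    omega
  calc _ ≤ _ := h1.trans h2
    _ = (q * r + (1 - q)) ^ N / r ^ m := by rw [sum_binPMF_mul_pow]

/-- Chernoff-type lower tail bound via tilting. -/
lemma lower_tail {q s : ℝ} (hq0 : 0 ≤ q) (hq1 : q ≤ 1) (hs : 1 ≤ s) {m N : ℕ} (hm : m ≤ N) :
    ∑ k ∈ Finset.range (m + 1), binPMF N q k ≤ s ^ m * (q / s + (1 - q)) ^ N := by
  have hs0 : (0:ℝ) < s := lt_of_lt_of_le one_pos hs
  have key : ∑ k ∈ Finset.range (N + 1), binPMF N q k * (1 / s) ^ k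
      = (q / s + (1 - q)) ^ N := by
    have := sum_binPMF_mul_pow N q (1 / s)
    rw [this]
    ring_nf
  have h1 : ∑ k ∈ Finset.range (m + 1), binPMF N q k
      ≤ ∑ k ∈ Finset.range (m + 1), s ^ m * (binPMF N q k * (1 / s) ^ k) := by
    refine Finset.sum_le_sum fun k hk => ?_
    have hkm : k ≤ m := by simp only [Finset.mem_range] at hk; omega
    have hnn := binPMF_nonneg hq0 hq1 (N := N) k
    have hpow : s ^ k ≤ s ^ m := pow_le_pow_right₀ hs hkm
    rw [one_div, inv_pow, mul_comm (s ^ m), mul_assoc]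
    have h1 : 1 ≤ (s ^ k)⁻¹ * s ^ m := by
      rw [inv_mul_eq_div, le_div_iff₀ (by positivity), one_mul]
      exact hpow
    nlinarith
  have h2 : ∑ k ∈ Finset.range (m + 1), s ^ m * (binPMF N q k * (1 / s) ^ k)
      ≤ s ^ m * ∑ k ∈ Finset.range (N + 1), binPMF N q k * (1 / s) ^ k := by
    rw [← Finset.mul_sum]
    apply mul_le_mul_of_nonneg_left ?_ (by positivity)
    refine Finset.sum_le_sum_of_subset_of_nonneg (Finset.range_subset_range.2 (by omega))
      fun j _ _ => mul_nonneg (binPMF_nonneg hq0 hq1 j) (by positivity)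
  calc _ ≤ _ := h1.trans h2
    _ = s ^ m * (q / s + (1 - q)) ^ N := by rw [key]

/-- If a function has negative derivative at 1, some point to the right has smaller value. -/
lemma exists_gt_lt_of_deriv_neg {f : ℝ → ℝ} {d : ℝ} (hf : HasDerivAt f d 1) (hd : d < 0) :
    ∃ x : ℝ, 1 < x ∧ f x < f 1 := by
  have h := hasDerivAt_iff_tendsto_slope.1 hf
  have h2 : ∀ᶠ x in nhdsWithin (1:ℝ) {(1:ℝ)}ᶜ, slope f 1 x < 0 :=
    h.eventually (gt_mem_nhds hd)
  have hle : nhdsWithin (1:ℝ) (Set.Ioi 1) ≤ nhdsWithin (1:ℝ) {(1:ℝ)}ᶜ :=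
    nhdsWithin_mono _ (fun x hx => ne_of_gt hx)
  have h3 : ∀ᶠ x in nhdsWithin (1:ℝ) (Set.Ioi 1), slope f 1 x < 0 := hle h2
  have h4 : ∀ᶠ x in nhdsWithin (1:ℝ) (Set.Ioi 1), x ∈ Set.Ioi (1:ℝ) :=
    eventually_mem_nhdsWithin
  obtain ⟨x, hx1, hx2⟩ := (h3.and h4).exists
  refine ⟨x, hx2, ?_⟩
  rw [slope_def_field] at hx1
  have hx3 : (0:ℝ) < x - 1 := by simp only [Set.mem_Ioi] at hx2; linarith
  have := div_neg_iff.1 hx1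
  rcases this with ⟨_, h⟩ | ⟨h, _⟩ <;> [linarith; linarith]

lemma exists_gt_gt_of_deriv_pos {f : ℝ → ℝ} {d : ℝ} (hf : HasDerivAt f d 1) (hd : 0 < d) :
    ∃ x : ℝ, 1 < x ∧ f 1 < f x := by
  obtain ⟨x, hx1, hx2⟩ := exists_gt_lt_of_deriv_neg hf.neg (by linarith)
  exact ⟨x, hx1, by simpa using hx2⟩

lemma exists_tilt_upper {q t : ℝ} (hqt : q < t) :
    ∃ r : ℝ, 1 < r ∧ q * r + (1 - q) < r ^ t := by
  have hd : HasDerivAt (fun x : ℝ => q * x + (1 - q) - x ^ t) (q - t) 1 := by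
    have h1 : HasDerivAt (fun x : ℝ => x ^ t) (t * (1:ℝ) ^ (t - 1)) 1 :=
      Real.hasDerivAt_rpow_const (Or.inl one_ne_zero)
    rw [Real.one_rpow, mul_one] at h1
    have h2 : HasDerivAt (fun x : ℝ => q * x + (1 - q)) q 1 := by
      simpa using ((hasDerivAt_id (1:ℝ)).const_mul q).add_const (1 - q)
    exact h2.sub h1
  obtain ⟨x, hx1, hx2⟩ := exists_gt_lt_of_deriv_neg hd (by linarith)
  refine ⟨x, hx1, ?_⟩
  simp only [Real.one_rpow, mul_one] at hx2
  linarith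

lemma exists_tilt_lower {q t : ℝ} (htq : t < q) :
    ∃ s : ℝ, 1 < s ∧ q * s ^ (t - 1) + (1 - q) * s ^ t < 1 := by
  have hd : HasDerivAt (fun x : ℝ => q * x ^ (t - 1) + (1 - q) * x ^ t) (t - q) 1 := by
    have h1 : HasDerivAt (fun x : ℝ => x ^ (t - 1)) ((t - 1) * (1:ℝ) ^ (t - 1 - 1)) 1 :=
      Real.hasDerivAt_rpow_const (Or.inl one_ne_zero)
    have h2 : HasDerivAt (fun x : ℝ => x ^ t) (t * (1:ℝ) ^ (t - 1)) 1 :=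
      Real.hasDerivAt_rpow_const (Or.inl one_ne_zero)
    rw [Real.one_rpow, mul_one] at h1 h2
    have := (h1.const_mul q).add (h2.const_mul (1 - q))
    rw [show t - q = q * (t - 1) + (1 - q) * t by ring]
    exact this
  obtain ⟨x, hx1, hx2⟩ := exists_gt_lt_of_deriv_neg hd (by linarith)
  refine ⟨x, hx1, ?_⟩
  simp only [Real.one_rpow, mul_one] at hx2
  linarith

lemma geom_upper {q r t : ℝ} (hq0 : 0 ≤ q) (hq1 : q ≤ 1) (hr : 1 < r) {m N : ℕ}
    (hm : t * N ≤ (m : ℝ)) :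
    ∑ k ∈ Finset.Icc m N, binPMF N q k ≤ ((q * r + (1 - q)) / r ^ t) ^ N := by
  have hr0 : (0:ℝ) < r := by linarith
  have hrt : (0:ℝ) < r ^ t := Real.rpow_pos_of_pos hr0 t
  refine (upper_tail hq0 hq1 hr.le m N).trans ?_
  rw [div_pow]
  have hrpow : (r ^ t) ^ N ≤ r ^ m := by
    rw [← Real.rpow_natCast (r ^ t) N, ← Real.rpow_natCast r m,
      ← Real.rpow_mul hr0.le]
    exact Real.rpow_le_rpow_of_exponent_le hr.le hm
  have hnum : (0:ℝ) ≤ (q * r + (1 - q)) ^ N := by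
    apply pow_nonneg; nlinarith
  exact div_le_div_of_nonneg_left hnum (pow_pos hrt N) hrpow

lemma geom_lower {q s t : ℝ} (hq0 : 0 ≤ q) (hq1 : q ≤ 1) (hs : 1 < s) {m N : ℕ}
    (hmN : m ≤ N) (hm : (m : ℝ) ≤ t * N) :
    ∑ k ∈ Finset.range (m + 1), binPMF N q k
      ≤ (q * s ^ (t - 1) + (1 - q) * s ^ t) ^ N := by
  have hs0 : (0:ℝ) < s := by linarith
  refine (lower_tail hq0 hq1 hs.le hmN).trans ?_
  have key : q * s ^ (t - 1) + (1 - q) * s ^ t = s ^ t * (q / s + (1 - q)) := by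
    rw [Real.rpow_sub hs0, Real.rpow_one]
    ring
  rw [key, mul_pow]
  apply mul_le_mul_of_nonneg_right ?_
    (pow_nonneg (add_nonneg (div_nonneg hq0 hs0.le) (by linarith)) N)
  rw [← Real.rpow_natCast s m, ← Real.rpow_natCast (s ^ t) N, ← Real.rpow_mul hs0.le]
  exact Real.rpow_le_rpow_of_exponent_le hs.le hm

/-- with `K ~ Bin(N, q1)`, `X ~ Bin(N, q0)`, `q1 > q0`, and
`N_R ∈ O(N)`, the quantity `S_N = Σ_{k=1}^N f_N^{(1)}[k] (F_N^{(0)}[k-1])^{N_R}`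
tends to 1 as `N → ∞`. -/
theorem stmt_0 (q0 q1 : ℝ) (hq0 : 0 ≤ q0) (hq1 : q1 ≤ 1) (hlt : q0 < q1)
    (N_R : ℕ → ℕ) (C : ℝ) (hNR : ∀ N, (N_R N : ℝ) ≤ C * N) :
    Tendsto (fun N : ℕ =>
      ∑ k ∈ Finset.Icc 1 N, binPMF N q1 k * (binCDF N q0 (k - 1)) ^ (N_R N))
      atTop (nhds 1) := by
  have hq1' : (0:ℝ) < q1 := lt_of_le_of_lt hq0 hlt
  have hq0' : q0 ≤ 1 := le_of_lt (lt_of_lt_of_le hlt hq1)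
  set t : ℝ := (q0 + q1) / 2 with ht_def
  have htq0 : q0 < t := by rw [ht_def]; linarith
  have htq1 : t < q1 := by rw [ht_def]; linarith
  have ht0 : 0 < t := lt_of_le_of_lt hq0 htq0
  have ht1 : t < 1 := lt_of_lt_of_le htq1 hq1
  obtain ⟨r, hr1, hr⟩ := exists_tilt_upper (q := q0) htq0
  obtain ⟨s, hs1, hs⟩ := exists_tilt_lower (q := q1) htq1
  have hr0 : (0:ℝ) < r := by linarith
  have hs0 : (0:ℝ) < s := by linarith
  set ρ0 : ℝ := (q0 * r + (1 - q0)) / r ^ t with hρ0_def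
  set ρ1 : ℝ := q1 * s ^ (t - 1) + (1 - q1) * s ^ t with hρ1_def
  have hrt : (0:ℝ) < r ^ t := Real.rpow_pos_of_pos hr0 t
  have hρ0nn : 0 ≤ ρ0 := div_nonneg (by nlinarith) hrt.le
  have hρ0lt : ρ0 < 1 := (div_lt_one hrt).2 hr
  have hρ1nn : 0 ≤ ρ1 :=
    add_nonneg (mul_nonneg hq1'.le (Real.rpow_pos_of_pos hs0 _).le)
      (mul_nonneg (by linarith) (Real.rpow_pos_of_pos hs0 _).le)
  have hρ1lt : ρ1 < 1 := hs
  have hC : 0 ≤ C := by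
    have h := hNR 1
    simp only [Nat.cast_one, mul_one] at h
    exact le_trans (Nat.cast_nonneg _) h
  have hgeo0 : Tendsto (fun N : ℕ => C * N * ρ0 ^ N) atTop (nhds 0) := by
    have h := (tendsto_pow_const_mul_const_pow_of_abs_lt_one 1
      (by rwa [abs_of_nonneg hρ0nn])).const_mul C
    simp only [mul_zero, pow_one] at h
    simpa [mul_assoc] using h
  have hgeo1 : Tendsto (fun N : ℕ => ρ1 ^ N) atTop (nhds 0) :=
    tendsto_pow_atTop_nhds_zero_of_lt_one hρ1nn hρ1lt
  have hL : Tendsto (fun N : ℕ => (1 - ρ1 ^ N) * (1 - C * N * ρ0 ^ N)) atTop (nhds 1) := by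
    have h := ((tendsto_const_nhds (x := (1:ℝ))).sub hgeo1).mul ((tendsto_const_nhds (x := (1:ℝ))).sub hgeo0)
    simpa using h
  refine tendsto_of_tendsto_of_tendsto_of_le_of_le' hL tendsto_const_nhds ?_ ?_
  · -- lower bound
    filter_upwards [eventually_ge_atTop 1,
      hgeo0.eventually (eventually_le_nhds one_pos)] with N hN hE2
    set m : ℕ := ⌈t * (N:ℝ)⌉₊ with hm_def
    have hNpos : (0:ℝ) < N := by exact_mod_cast hN
    have hm1 : 1 ≤ m := Nat.one_le_iff_ne_zero.2 (by
      rw [hm_def]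
      simp only [ne_eq, Nat.ceil_eq_zero, not_le]
      positivity)
    have hmN : m ≤ N := Nat.ceil_le.2 (by
      calc t * (N:ℝ) ≤ 1 * N := by nlinarith
        _ = (N:ℝ) := one_mul _)
    have hm_ge : t * (N:ℝ) ≤ (m:ℝ) := Nat.le_ceil _
    have hm_le : ((m:ℝ)) - 1 ≤ t * N := by
      have := Nat.ceil_lt_add_one (by positivity : (0:ℝ) ≤ t * N)
      rw [← hm_def] at this
      linarith
    -- q1 lower-tail bound
    have tail1 : ∑ k ∈ Finset.range m, binPMF N q1 k ≤ ρ1 ^ N := by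
      have hcast : ((m - 1 : ℕ) : ℝ) = (m:ℝ) - 1 := by
        push_cast [hm1]; ring
      have h := geom_lower (q := q1) (s := s) (t := t) hq1'.le hq1 hs1
        (m := m - 1) (N := N) (by omega) (by rw [hcast]; linarith)
      rwa [Nat.sub_add_cancel hm1] at h
    -- q0 upper-tail bound
    have tail0 : ∑ k ∈ Finset.Icc m N, binPMF N q0 k ≤ ρ0 ^ N :=
      geom_upper hq0 hq0' hr1 hm_ge
    -- the CDF value at the threshold
    set c : ℝ := binCDF N q0 (m - 1) with hc_def
    have hc0 : 0 ≤ c := binCDF_nonneg hq0 hq0' _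
    have hc1 : c ≤ 1 := binCDF_le_one hq0 hq0' (by omega)
    have hc_sum : c = ∑ k ∈ Finset.range m, binPMF N q0 k := by
      rw [hc_def, binCDF, Nat.sub_add_cancel hm1]
    have hsplit : ∑ k ∈ Finset.Icc m N, binPMF N q0 k
        = 1 - ∑ k ∈ Finset.range m, binPMF N q0 k := by
      rw [← Finset.Ico_add_one_right_eq_Icc, Finset.sum_Ico_eq_sub _ (by omega), sum_binPMF_eq_one]
    have hT : 1 - c ≤ ρ0 ^ N := by
      rw [hc_sum]; rw [hsplit] at tail0; linarith
    -- Bernoulli bound for the power of the CDF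
    have hB : 1 - C * N * ρ0 ^ N ≤ c ^ (N_R N) := by
      have hb := one_add_mul_le_pow (a := c - 1) (by linarith) (N_R N)
      have hb' : 1 - (N_R N : ℝ) * (1 - c) ≤ c ^ (N_R N) := by
        calc 1 - (N_R N : ℝ) * (1 - c) = 1 + (N_R N : ℝ) * (c - 1) := by ring
          _ ≤ (1 + (c - 1)) ^ (N_R N) := hb
          _ = c ^ (N_R N) := by ring_nf
      have h1 : (N_R N : ℝ) * (1 - c) ≤ (N_R N : ℝ) * ρ0 ^ N :=
        mul_le_mul_of_nonneg_left hT (Nat.cast_nonneg _)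
      have h2 : (N_R N : ℝ) * ρ0 ^ N ≤ C * N * ρ0 ^ N :=
        mul_le_mul_of_nonneg_right (hNR N) (pow_nonneg hρ0nn N)
      linarith
    -- lower-bounding the sum
    have hA : 1 - ρ1 ^ N ≤ ∑ k ∈ Finset.Icc m N, binPMF N q1 k := by
      have hsplit1 : ∑ k ∈ Finset.Icc m N, binPMF N q1 k
          = 1 - ∑ k ∈ Finset.range m, binPMF N q1 k := by
        rw [← Finset.Ico_add_one_right_eq_Icc, Finset.sum_Ico_eq_sub _ (by omega), sum_binPMF_eq_one]
      rw [hsplit1]; linarith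
    have hAnn : 0 ≤ ∑ k ∈ Finset.Icc m N, binPMF N q1 k :=
      Finset.sum_nonneg fun k _ => binPMF_nonneg hq1'.le hq1 k
    have step1 : (∑ k ∈ Finset.Icc m N, binPMF N q1 k) * c ^ (N_R N)
        ≤ ∑ k ∈ Finset.Icc m N, binPMF N q1 k * (binCDF N q0 (k - 1)) ^ (N_R N) := by
      rw [Finset.sum_mul]
      refine Finset.sum_le_sum fun k hk => ?_
      have hkm : m ≤ k := (Finset.mem_Icc.1 hk).1
      have hcdf : c ≤ binCDF N q0 (k - 1) := binCDF_mono hq0 hq0' (by omega)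
      exact mul_le_mul_of_nonneg_left (pow_le_pow_left₀ hc0 hcdf _)
        (binPMF_nonneg hq1'.le hq1 k)
    have step2 : ∑ k ∈ Finset.Icc m N, binPMF N q1 k * (binCDF N q0 (k - 1)) ^ (N_R N)
        ≤ ∑ k ∈ Finset.Icc 1 N, binPMF N q1 k * (binCDF N q0 (k - 1)) ^ (N_R N) := by
      refine Finset.sum_le_sum_of_subset_of_nonneg ?_ fun k _ _ =>
        mul_nonneg (binPMF_nonneg hq1'.le hq1 k)
          (pow_nonneg (binCDF_nonneg hq0 hq0' _) _)
      intro x hx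
      simp only [Finset.mem_Icc] at *
      omega
    have step0 : (1 - ρ1 ^ N) * (1 - C * N * ρ0 ^ N)
        ≤ (∑ k ∈ Finset.Icc m N, binPMF N q1 k) * c ^ (N_R N) := by
      apply mul_le_mul hA hB (by linarith) hAnn
    exact step0.trans (step1.trans step2)
  · -- upper bound by 1
    filter_upwards [eventually_ge_atTop 1] with N hN
    calc ∑ k ∈ Finset.Icc 1 N, binPMF N q1 k * (binCDF N q0 (k - 1)) ^ (N_R N)
        ≤ ∑ k ∈ Finset.Icc 1 N, binPMF N q1 k := by
          refine Finset.sum_le_sum fun k hk => ?_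
          have hk' := Finset.mem_Icc.1 hk
          have h1 : binCDF N q0 (k - 1) ≤ 1 := binCDF_le_one hq0 hq0' (by omega)
          exact mul_le_of_le_one_right (binPMF_nonneg hq1'.le hq1 k)
            (pow_le_one₀ (binCDF_nonneg hq0 hq0' _) h1)
      _ ≤ ∑ k ∈ Finset.range (N + 1), binPMF N q1 k := by
          refine Finset.sum_le_sum_of_subset_of_nonneg ?_
            fun k _ _ => binPMF_nonneg hq1'.le hq1 k
          intro x hx
          simp only [Finset.mem_Icc, Finset.mem_range] at *
          omega
      _ = 1 := sum_binPMF_eq_one N q1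
end

section
/- For invertible positive operators A(t) depending differentiably on a parameter t, the derivative of the matrix logarithm satisfies d/dt log A(t) = ∫_0^1 [sA(t) + (1-s)I]^{-1} (dA/dt) [sA(t) + (1-s)I]^{-1} ds. -/
open intervalIntegral

attribute [local instance] Matrix.frobeniusNormedAddCommGroup
  Matrix.frobeniusNormedRing Matrix.frobeniusNormedSpace

/-- The matrix logarithm, via the integral representation
`log A = ∫_0^1 (A - I)[s(A - I) + I]⁻¹ ds`. -/
noncomputable def matrixLog {d : ℕ} (B : Matrix (Fin d) (Fin d) ℝ) :
    Matrix (Fin d) (Fin d) ℝ :=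
  ∫ s in (0:ℝ)..1, (B - 1) * (s • (B - 1) + 1)⁻¹

attribute [local instance] Matrix.frobeniusNormedAlgebra

section Aux18

variable {d : ℕ}

private lemma combo_eq (B : Matrix (Fin d) (Fin d) ℝ) (s : ℝ) :
    s • (B - 1) + 1 = s • B + (1 - s) • (1 : Matrix (Fin d) (Fin d) ℝ) := by
  rw [smul_sub, sub_smul, one_smul]
  abel

private lemma posDef_combo {B : Matrix (Fin d) (Fin d) ℝ} (hB : B.PosDef) {s : ℝ}
    (hs : s ∈ Set.Icc (0:ℝ) 1) : (s • (B - 1) + 1 : Matrix (Fin d) (Fin d) ℝ).PosDef := by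
  rw [combo_eq]
  rcases hs with ⟨h0, h1⟩
  rcases h0.eq_or_lt with h | h
  · subst h
    simpa using Matrix.PosDef.one
  · rcases h1.eq_or_lt with h' | h'
    · subst h'
      simpa using hB
    · exact (hB.smul h).add (Matrix.PosDef.one.smul (by linarith))

private lemma exists_delta (B₀ : Matrix (Fin d) (Fin d) ℝ) (hB₀ : B₀.PosDef) :
    ∃ δ > 0, ∀ B ∈ Metric.closedBall B₀ δ, ∀ s ∈ Set.Icc (0:ℝ) 1,
      IsUnit (s • (B - 1) + 1 : Matrix (Fin d) (Fin d) ℝ) := by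
  classical
  set U : Set (Matrix (Fin d) (Fin d) ℝ × ℝ) :=
    {p | (p.2 • (p.1 - 1) + 1 : Matrix (Fin d) (Fin d) ℝ).det ≠ 0} with hU_def
  have hcont : Continuous fun p : Matrix (Fin d) (Fin d) ℝ × ℝ =>
      (p.2 • (p.1 - 1) + 1 : Matrix (Fin d) (Fin d) ℝ).det :=
    ((continuous_snd.smul (continuous_fst.sub continuous_const)).add
      continuous_const).matrix_det
  have hU : IsOpen U := isOpen_compl_singleton.preimage hcont
  have hK : IsCompact (({B₀} : Set (Matrix (Fin d) (Fin d) ℝ)) ×ˢ Set.Icc (0:ℝ) 1) :=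
    isCompact_singleton.prod isCompact_Icc
  have hKU : (({B₀} : Set (Matrix (Fin d) (Fin d) ℝ)) ×ˢ Set.Icc (0:ℝ) 1) ⊆ U := by
    rintro ⟨B, s⟩ ⟨hB, hs⟩
    rcases hB with rfl
    exact ne_of_gt (posDef_combo hB₀ hs).det_pos
  obtain ⟨ε, hε, hsub⟩ := hK.exists_thickening_subset_open hU hKU
  refine ⟨ε / 2, by positivity, fun B hB s hs => ?_⟩
  have hmem : (B, s) ∈ Metric.thickening ε
      (({B₀} : Set (Matrix (Fin d) (Fin d) ℝ)) ×ˢ Set.Icc (0:ℝ) 1) := by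
    rw [Metric.mem_thickening_iff]
    refine ⟨(B₀, s), ⟨rfl, hs⟩, ?_⟩
    have : dist (B, s) (B₀, s) = max (dist B B₀) (dist s s) := Prod.dist_eq
    rw [this, dist_self]
    have hd : dist B B₀ ≤ ε / 2 := hB
    have : max (dist B B₀) 0 ≤ ε / 2 := max_le hd (by positivity)
    linarith
  have hdet := hsub hmem
  exact (Matrix.isUnit_iff_isUnit_det _).mpr (isUnit_iff_ne_zero.mpr hdet)

private lemma key_deriv {B : Matrix (Fin d) (Fin d) ℝ} {s : ℝ}
    (h : IsUnit (s • (B - 1) + 1 : Matrix (Fin d) (Fin d) ℝ)) :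
    HasFDerivAt (fun C : Matrix (Fin d) (Fin d) ℝ => (C - 1) * (s • (C - 1) + 1)⁻¹)
      (ContinuousLinearMap.mulLeftRight ℝ _ (s • (B - 1) + 1)⁻¹ (s • (B - 1) + 1)⁻¹) B := by
  classical
  set N : Matrix (Fin d) (Fin d) ℝ := B - 1 with hN
  set M : Matrix (Fin d) (Fin d) ℝ := s • N + 1 with hM
  have hdet : IsUnit M.det := (Matrix.isUnit_iff_isUnit_det M).mp h
  have hMW : M * M⁻¹ = 1 := Matrix.mul_nonsing_inv M hdet
  set W : Matrix (Fin d) (Fin d) ℝ := M⁻¹ with hW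
  -- derivative of C ↦ C - 1
  have h1 : HasFDerivAt (fun C : Matrix (Fin d) (Fin d) ℝ => C - 1)
      (ContinuousLinearMap.id ℝ _) B := (hasFDerivAt_id B).sub_const 1
  -- derivative of C ↦ s • (C - 1) + 1
  have h2 : HasFDerivAt (fun C : Matrix (Fin d) (Fin d) ℝ => s • (C - 1) + 1)
      (s • ContinuousLinearMap.id ℝ _) B := (h1.const_smul s).add_const 1
  -- derivative of inverse
  have h3 : HasFDerivAt (fun C : Matrix (Fin d) (Fin d) ℝ => (s • (C - 1) + 1)⁻¹)
      ((-(ContinuousLinearMap.mulLeftRight ℝ _ W W)).comp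
        (s • ContinuousLinearMap.id ℝ _)) B := by
    have hinv := hasFDerivAt_ringInverse (𝕜 := ℝ) h.unit
    rw [h.unit_spec] at hinv
    have hcoe : ((h.unit⁻¹ : (Matrix (Fin d) (Fin d) ℝ)ˣ) : Matrix (Fin d) (Fin d) ℝ) = W := by
      rw [hW, Matrix.coe_units_inv, h.unit_spec]
    rw [hcoe] at hinv
    have := hinv.comp B h2
    simp only [Function.comp_def] at this
    have hfun : (fun C : Matrix (Fin d) (Fin d) ℝ => Ring.inverse (s • (C - 1) + 1)) =
        fun C : Matrix (Fin d) (Fin d) ℝ => (s • (C - 1) + 1)⁻¹ := by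
      funext C
      rw [Matrix.nonsing_inv_eq_ringInverse]
    rwa [hfun] at this
  have h4 := h1.mul' h3
  have hkey : (1 : Matrix (Fin d) (Fin d) ℝ) - s • (N * W) = W := by
    have hMW' : M * W = s • (N * W) + W := by
      rw [hM, add_mul, one_mul, smul_mul_assoc]
    rw [← hMW, hMW']
    abel
  convert h4 using 1
  · rfl
  · rfl
  · rfl
  refine ContinuousLinearMap.ext fun H => ?_
  simp only [ContinuousLinearMap.mulLeftRight_apply, ContinuousLinearMap.add_apply,
    ContinuousLinearMap.smul_apply, ContinuousLinearMap.comp_apply,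
    ContinuousLinearMap.neg_apply, ContinuousLinearMap.id_apply,
    ContinuousLinearMap.smulRight_apply, ContinuousLinearMap.coe_smul', Pi.smul_apply,
    smul_eq_mul]
  have e1 : N * -(W * (s • H) * W) = -(s • (N * (W * (H * W)))) := by
    rw [mul_smul_comm, smul_mul_assoc, mul_neg, mul_smul_comm, mul_assoc]
  have hfin : W * H * W = N * -(W * (s • H) * W) + H * W := by
    rw [e1]
    have h5 : W * H * W = H * W - s • (N * (W * (H * W))) := by
      calc W * H * W = (1 - s • (N * W)) * (H * W) := by rw [hkey, mul_assoc]
        _ = H * W - s • (N * (W * (H * W))) := by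
            rw [sub_mul, one_mul, smul_mul_assoc, mul_assoc]
    rw [h5]
    abel
  exact hfin

private lemma contOn_inv {B : Matrix (Fin d) (Fin d) ℝ}
    (h : ∀ s ∈ Set.Icc (0:ℝ) 1, IsUnit (s • (B - 1) + 1 : Matrix (Fin d) (Fin d) ℝ)) :
    ContinuousOn (fun s : ℝ => (s • (B - 1) + 1 : Matrix (Fin d) (Fin d) ℝ)⁻¹)
      (Set.Icc (0:ℝ) 1) := by
  intro s hs
  have hdet := (Matrix.isUnit_iff_isUnit_det _).mp (h s hs)
  have hca : ContinuousAt Ring.inverse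
      ((s • (B - 1) + 1 : Matrix (Fin d) (Fin d) ℝ).det) :=
    NormedRing.inverse_continuousAt hdet.unit
  have hm : ContinuousAt (fun s : ℝ => (s • (B - 1) + 1 : Matrix (Fin d) (Fin d) ℝ)) s :=
    ((continuous_id.smul continuous_const).add continuous_const).continuousAt
  exact ((continuousAt_matrix_inv _ hca).comp_of_eq hm rfl).continuousWithinAt

end Aux18

set_option maxHeartbeats 1000000 in
/-- for a differentiable family `A(t)` of positive-definite
matrices, `d/dt log A(t) = ∫_0^1 [sA(t) + (1-s)I]⁻¹ (dA/dt) [sA(t) + (1-s)I]⁻¹ ds`. -/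
theorem stmt_18 {d : ℕ} (A : ℝ → Matrix (Fin d) (Fin d) ℝ)
    (A' : Matrix (Fin d) (Fin d) ℝ) (t : ℝ)
    (hpos : ∀ u, (A u).PosDef) (hA : HasDerivAt A A' t)
    (hdiff : Differentiable ℝ A) :
    HasDerivAt (fun u => matrixLog (A u))
      (∫ s in (0:ℝ)..1, (s • A t + (1 - s) • 1)⁻¹ * A' * (s • A t + (1 - s) • 1)⁻¹) t := by
  classical
  letI : TopologicalSpace (Matrix (Fin d) (Fin d) ℝ) :=
    Matrix.frobeniusNormedAddCommGroup.toUniformSpace.toTopologicalSpace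
  obtain ⟨δ, hδ, hunit⟩ := exists_delta (A t) (hpos t)
  set B₀ : Matrix (Fin d) (Fin d) ℝ := A t with hB₀
  set Fm : Matrix (Fin d) (Fin d) ℝ → ℝ → Matrix (Fin d) (Fin d) ℝ :=
    fun B s => (B - 1) * (s • (B - 1) + 1)⁻¹ with hFm
  set Fd : Matrix (Fin d) (Fin d) ℝ → ℝ →
      (Matrix (Fin d) (Fin d) ℝ →L[ℝ] Matrix (Fin d) (Fin d) ℝ) :=
    fun B s => ContinuousLinearMap.mulLeftRight ℝ _ (s • (B - 1) + 1)⁻¹ (s • (B - 1) + 1)⁻¹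
    with hFd
  -- continuity of the inverse on the compact set S
  set S : Set (Matrix (Fin d) (Fin d) ℝ × ℝ) :=
    Metric.closedBall B₀ δ ×ˢ Set.Icc (0:ℝ) 1 with hS
  have hMc : Continuous fun p : Matrix (Fin d) (Fin d) ℝ × ℝ =>
      (p.2 • (p.1 - 1) + 1 : Matrix (Fin d) (Fin d) ℝ) :=
    (continuous_snd.smul (continuous_fst.sub continuous_const)).add continuous_const
  have hinvS : ContinuousOn (fun p : Matrix (Fin d) (Fin d) ℝ × ℝ =>
      (p.2 • (p.1 - 1) + 1 : Matrix (Fin d) (Fin d) ℝ)⁻¹) S := by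
    intro p hp
    have hu : IsUnit (p.2 • (p.1 - 1) + 1 : Matrix (Fin d) (Fin d) ℝ) :=
      hunit p.1 hp.1 p.2 hp.2
    have hdet : IsUnit (p.2 • (p.1 - 1) + 1 : Matrix (Fin d) (Fin d) ℝ).det :=
      (Matrix.isUnit_iff_isUnit_det _).mp hu
    have hca : ContinuousAt Ring.inverse
        ((p.2 • (p.1 - 1) + 1 : Matrix (Fin d) (Fin d) ℝ).det) :=
      NormedRing.inverse_continuousAt hdet.unit
    have hca1 : ContinuousAt (fun p : Matrix (Fin d) (Fin d) ℝ × ℝ =>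
        (p.2 • (p.1 - 1) + 1 : Matrix (Fin d) (Fin d) ℝ)) p := hMc.continuousAt
    have hca2 : ContinuousAt (Inv.inv : Matrix (Fin d) (Fin d) ℝ → Matrix (Fin d) (Fin d) ℝ)
        (p.2 • (p.1 - 1) + 1) := continuousAt_matrix_inv _ hca
    exact (hca2.comp_of_eq hca1 rfl).continuousWithinAt
  have hScomp : IsCompact S := (isCompact_closedBall _ _).prod isCompact_Icc
  have hSne : S.Nonempty := ⟨(B₀, 0), Metric.mem_closedBall_self hδ.le, by norm_num⟩
  obtain ⟨q, hqS, hq⟩ := hScomp.exists_isMaxOn hSne hinvS.norm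
  rw [isMaxOn_iff] at hq
  set C : ℝ := ‖(q.2 • (q.1 - 1) + 1 : Matrix (Fin d) (Fin d) ℝ)⁻¹‖ with hC
  have hC0 : 0 ≤ C := norm_nonneg _
  have hbnd : ∀ B ∈ Metric.closedBall B₀ δ, ∀ s ∈ Set.Icc (0:ℝ) 1, ‖Fd B s‖ ≤ C * C := by
    intro B hB s hs
    have hq' := hq (B, s) ⟨hB, hs⟩
    calc ‖Fd B s‖ ≤ ‖(s • (B - 1) + 1 : Matrix (Fin d) (Fin d) ℝ)⁻¹‖ *
        ‖(s • (B - 1) + 1 : Matrix (Fin d) (Fin d) ℝ)⁻¹‖ :=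
          ContinuousLinearMap.opNorm_mulLeftRight_apply_apply_le ℝ _ _ _
      _ ≤ C * C := mul_le_mul hq' hq' (norm_nonneg _) hC0
  -- continuity in s for fixed B in the ball
  have hFmc : ∀ B ∈ Metric.closedBall B₀ δ, ContinuousOn (Fm B) (Set.Icc (0:ℝ) 1) := by
    intro B hB
    have hinv := contOn_inv (fun s hs => hunit B hB s hs)
    exact (ContinuousLinearMap.mul ℝ (Matrix (Fin d) (Fin d) ℝ) (B - 1)).continuous.comp_continuousOn hinv
  have hFdc : ContinuousOn (Fd B₀) (Set.Icc (0:ℝ) 1) := by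
    have hinv := contOn_inv (fun s hs => hunit B₀ (Metric.mem_closedBall_self hδ.le) s hs)
    exact (((ContinuousLinearMap.mulLeftRight ℝ
      (Matrix (Fin d) (Fin d) ℝ)).continuous.comp_continuousOn hinv).clm_apply hinv)
  have huIoc : Set.uIoc (0:ℝ) 1 = Set.Ioc 0 1 := Set.uIoc_of_le zero_le_one
  have huIcc : Set.uIcc (0:ℝ) 1 = Set.Icc 0 1 := Set.uIcc_of_le zero_le_one
  -- apply differentiation under the integral sign
  have main : HasFDerivAt (fun B => ∫ s in (0:ℝ)..1, Fm B s)
      (∫ s in (0:ℝ)..1, Fd B₀ s) B₀ := by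
    apply intervalIntegral.hasFDerivAt_integral_of_dominated_of_fderiv_le
      (bound := fun _ => C * C) (F' := Fd) (s := Metric.ball B₀ δ) (Metric.ball_mem_nhds B₀ hδ)
    · filter_upwards [Metric.closedBall_mem_nhds B₀ hδ] with B hB
      exact ((hFmc B hB).mono (by rw [huIoc]; exact Set.Ioc_subset_Icc_self)
        ).aestronglyMeasurable measurableSet_uIoc
    · exact ((hFmc B₀ (Metric.mem_closedBall_self hδ.le)).mono (by rw [huIcc])
        ).intervalIntegrable
    · exact ((hFdc.mono (by rw [huIoc]; exact Set.Ioc_subset_Icc_self)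
        ).aestronglyMeasurable measurableSet_uIoc)
    · filter_upwards with s hs B hB
      exact hbnd B (Metric.ball_subset_closedBall hB) s
        ((by rw [huIoc] at hs; exact Set.Ioc_subset_Icc_self hs))
    · exact intervalIntegrable_const
    · filter_upwards with s hs B hB
      exact key_deriv (hunit B (Metric.ball_subset_closedBall hB) s
        (by rw [huIoc] at hs; exact Set.Ioc_subset_Icc_self hs))
  have hcomp0 := HasFDerivAt.comp_hasDerivAt_of_eq (f := A) (x := t) main hA hB₀
  have hFdint : IntervalIntegrable (Fd B₀) MeasureTheory.volume 0 1 :=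
    (hFdc.mono (by rw [huIcc])).intervalIntegrable
  have happ : (∫ s in (0:ℝ)..1, Fd B₀ s) A' = ∫ s in (0:ℝ)..1, Fd B₀ s A' :=
    ContinuousLinearMap.intervalIntegral_apply hFdint A'
  have hfinal : (∫ s in (0:ℝ)..1, Fd B₀ s A') =
      ∫ s in (0:ℝ)..1, (s • A t + (1 - s) • 1)⁻¹ * A' * (s • A t + (1 - s) • 1)⁻¹ := by
    refine intervalIntegral.integral_congr fun s _ => ?_
    rw [hFd]
    simp only [ContinuousLinearMap.mulLeftRight_apply]
    rw [← hB₀, combo_eq]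
  rw [happ, hfinal] at hcomp0
  exact hcomp0
end
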